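/- Let ρ be a 2^n × 2^n density matrix with a nonzero off-diagonal entry ρ_{xy} = |ρ_{xy}| e^{−iβ} ≠ 0 for some n-bit strings x ≠ y, let θ > 0, and let ρ(θ) be the dephased state with entries ρ(θ)_{uv} = e^{−h(u,v)θ} ρ_{uv}. Consider the POVM M_1 = ½(|x⟩⟨x| + e^{−iβ}|x⟩⟨y| + e^{iβ}|y⟩⟨x| + |y⟩⟨y|), M_2 = ½(|x⟩⟨x| − e^{−iβ}|x⟩⟨y| − e^{iβ}|y⟩⟨x| + |y⟩⟨y|), M_3 = I − |x⟩⟨x| − |y⟩⟨y|, with outcome probabilities p(a|θ) = tr(ρ(θ)M_a). Then p(1|θ) = ½(ρ_{xx} + ρ_{yy} + 2|ρ_{xy}|e^{−h(x,y)θ}), p(2|θ) = ½(ρ_{xx} + ρ_{yy} − 2|ρ_{xy}|e^{−h(x,y)θ}), both are strictly positive, and the classical Fisher information F(θ) = ∑_a (∂_θ p(a|θ))²/p(a|θ) = [h(x,y)|ρ_{xy}|e^{−h(x,y)θ}]²(1/p(1|θ) + 1/p(2|θ)) is strictly positive. -/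

import Mathlib

open scoped Matrix ComplexOrder

private lemma trace_mul_std {m : Type*} [Fintype m] [DecidableEq m]
    (A : Matrix m m ℂ) (i j : m) :
    (A * Matrix.single i j (1 : ℂ)).trace = A j i := by
  rw [Matrix.trace]
  rw [Finset.sum_eq_single j]
  · simp [Matrix.diag]
  · intro b _ hb
    simp [Matrix.diag, hb]
  · simp

/-- Every state with a nonzero off-diagonal entry has strictly positive Fisher
information for dephasing estimation: the explicit POVM `{M₁, M₂, M₃}` yields outcome
probabilities `p(1|θ), p(2|θ)` of the stated form, both strictly positive, and the
classical Fisher information is strictly positive. -/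
theorem nonzero_coherence_positive_fisher_information (n : ℕ)
    (ρ : Matrix (Fin n → Bool) (Fin n → Bool) ℂ)
    (hρ : ρ.PosSemidef) (hρ1 : ρ.trace = 1)
    (x y : Fin n → Bool) (hxy : x ≠ y) (hxy0 : ρ x y ≠ 0)
    (β : ℝ) (hβ : ρ x y = (‖ρ x y‖ : ℂ) * Complex.exp (-(↑β * Complex.I)))
    (θ : ℝ) (hθ : 0 < θ)
    (ρθ : Matrix (Fin n → Bool) (Fin n → Bool) ℂ)
    (hρθ : ρθ = Matrix.of fun u v => (Real.exp (-(hammingDist u v : ℝ) * θ) : ℂ) * ρ u v)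
    (M₁ M₂ : Matrix (Fin n → Bool) (Fin n → Bool) ℂ)
    (hM₁ : M₁ = (1 / 2 : ℂ) • (Matrix.single x x 1
      + Complex.exp (-(↑β * Complex.I)) • Matrix.single x y 1
      + Complex.exp (↑β * Complex.I) • Matrix.single y x 1
      + Matrix.single y y 1))
    (hM₂ : M₂ = (1 / 2 : ℂ) • (Matrix.single x x 1
      - Complex.exp (-(↑β * Complex.I)) • Matrix.single x y 1
      - Complex.exp (↑β * Complex.I) • Matrix.single y x 1
      + Matrix.single y y 1))
    (p₁ p₂ : ℝ)
    (hp₁ : p₁ = ((ρ x x).re + (ρ y y).re) / 2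
      + ‖ρ x y‖ * Real.exp (-(hammingDist x y : ℝ) * θ))
    (hp₂ : p₂ = ((ρ x x).re + (ρ y y).re) / 2
      - ‖ρ x y‖ * Real.exp (-(hammingDist x y : ℝ) * θ)) :
    (ρθ * M₁).trace = (p₁ : ℂ) ∧ (ρθ * M₂).trace = (p₂ : ℂ) ∧
    0 < p₁ ∧ 0 < p₂ ∧
    0 < ((hammingDist x y : ℝ) * ‖ρ x y‖
          * Real.exp (-(hammingDist x y : ℝ) * θ)) ^ 2 * (1 / p₁ + 1 / p₂) := by
  set r : ℝ := ‖ρ x y‖ with hr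
  set E : ℝ := Real.exp (-(hammingDist x y : ℝ) * θ) with hE
  have he : Complex.exp (-(↑β * Complex.I)) * Complex.exp (↑β * Complex.I) = 1 := by
    rw [← Complex.exp_add, neg_add_cancel, Complex.exp_zero]
  have hconj : (starRingEnd ℂ) (Complex.exp (↑β * Complex.I)) = Complex.exp (-(↑β * Complex.I)) := by
    rw [← Complex.exp_conj]
    congr 1
    simp [Complex.ext_iff]
  have hyx : ρ y x = (r : ℂ) * Complex.exp (↑β * Complex.I) := by
    have h1 : star (ρ x y) = ρ y x := hρ.1.apply y x
    rw [← h1, hβ]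
    simp only [star_mul', RCLike.star_def, Complex.conj_ofReal]
    rw [show (starRingEnd ℂ) (Complex.exp (-(↑β * Complex.I))) = Complex.exp (↑β * Complex.I) by
      rw [← Complex.exp_conj]; congr 1; simp [Complex.ext_iff]]
  have hxx : ((ρ x x).re : ℂ) = ρ x x := hρ.1.coe_re_apply_self x
  have hyy : ((ρ y y).re : ℂ) = ρ y y := hρ.1.coe_re_apply_self y
  have hρθxy : ρθ x y = (E : ℂ) * ρ x y := by rw [hρθ]; rfl
  have hρθyx : ρθ y x = (E : ℂ) * ρ y x := by
    rw [hρθ]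
    simp only [Matrix.of_apply]
    rw [hammingDist_comm]
  have hρθxx : ρθ x x = ρ x x := by
    rw [hρθ]; simp [hammingDist_self]
  have hρθyy : ρθ y y = ρ y y := by
    rw [hρθ]; simp [hammingDist_self]
  have ht₁ : (ρθ * M₁).trace = (p₁ : ℂ) := by
    rw [hM₁]
    simp only [mul_add, Matrix.mul_smul, Matrix.trace_add, Matrix.trace_smul, smul_eq_mul,
      trace_mul_std]
    rw [hρθxy, hρθyx, hρθxx, hρθyy, hβ, hyx, hp₁]
    push_cast
    linear_combination (-(1:ℂ)/2) * hxx + (-(1:ℂ)/2) * hyy + ((E:ℂ) * (r:ℂ)) * he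
  have ht₂ : (ρθ * M₂).trace = (p₂ : ℂ) := by
    rw [hM₂]
    simp only [mul_add, mul_sub, Matrix.mul_smul, Matrix.trace_add, Matrix.trace_sub,
      Matrix.trace_smul, smul_eq_mul, trace_mul_std]
    rw [hρθxy, hρθyx, hρθxx, hρθyy, hβ, hyx, hp₂]
    push_cast
    linear_combination (-(1:ℂ)/2) * hxx + (-(1:ℂ)/2) * hyy - ((E:ℂ) * (r:ℂ)) * he
  have key : 2 * r ≤ (ρ x x).re + (ρ y y).re := by
    set v : (Fin n → Bool) → ℂ :=
      Pi.single x 1 + Pi.single y (-(Complex.exp (↑β * Complex.I))) with hv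
    have hnn := hρ.dotProduct_mulVec_nonneg v
    have hform : dotProduct (star v) (ρ *ᵥ v)
        = ρ x x + ρ y y - 2 * (r : ℂ) := by
      have hsv : star v = Pi.single x 1 + Pi.single y (-(Complex.exp (-(↑β * Complex.I)))) := by
        rw [hv, star_add, ← Pi.single_star, ← Pi.single_star, star_one, star_neg,
          RCLike.star_def, hconj]
      rw [hsv, hv, Matrix.mulVec_add, Matrix.mulVec_single, Matrix.mulVec_single,
        add_dotProduct, single_dotProduct, single_dotProduct]
      simp only [Pi.add_apply, Pi.smul_apply, Matrix.col_apply, op_smul_eq_mul]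
      rw [hβ, hyx]
      linear_combination (ρ y y - 2 * (r:ℂ)) * he
    rw [hform] at hnn
    have h2 := (Complex.le_def.mp hnn).1
    simp only [Complex.zero_re, Complex.sub_re, Complex.add_re, Complex.mul_re,
      Complex.ofReal_re, Complex.ofReal_im] at h2
    norm_num at h2
    linarith
  have hrpos : 0 < r := by
    rw [hr]; exact norm_pos_iff.mpr hxy0
  have hEpos : 0 < E := Real.exp_pos _
  have hE1 : E < 1 := by
    rw [hE, Real.exp_lt_one_iff]
    have hd : 0 < (hammingDist x y : ℝ) := by
      exact_mod_cast hammingDist_pos.mpr hxy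
    nlinarith
  have hp₁pos : 0 < p₁ := by rw [hp₁]; nlinarith
  have hp₂pos : 0 < p₂ := by rw [hp₂]; nlinarith
  refine ⟨ht₁, ht₂, hp₁pos, hp₂pos, ?_⟩
  have hd : 0 < (hammingDist x y : ℝ) := by
    exact_mod_cast hammingDist_pos.mpr hxy
  have h1 : 0 < (hammingDist x y : ℝ) * r * E := by positivity
  have h2 : 0 < 1 / p₁ + 1 / p₂ := by positivity
  positivity
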